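/- Let (t, e) be a counital fusion morphism on an object A of a braided monoidal category C, with induced multiplication m := t ≫ (e ⊗ 1_A) ≫ λ_A. Then (t ⊗ 1_A) ≫ (1_A ⊗ m) = (1_A ⊗ m) ≫ t as morphisms A ⊗ A ⊗ A ⟶ A ⊗ A (suppressing associators). -/

import Mathlib

open CategoryTheory Category MonoidalCategory

universe v u

variable {C : Type u} [Category.{v} C] [MonoidalCategory C] [BraidedCategory C]

/-- The fusion equation for `t : A ⊗ A ⟶ A ⊗ A` in a braided monoidal category,
with all coherence isomorphisms made explicit (domain `A ⊗ (A ⊗ A)`). -/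
def FusionEq (A : C) (t : A ⊗ A ⟶ A ⊗ A) : Prop :=
  (A ◁ t) ≫ (α_ A A A).inv ≫ ((β_ A A).hom ▷ A) ≫ (α_ A A A).hom ≫ (A ◁ t) ≫
      (α_ A A A).inv ≫ ((β_ A A).inv ▷ A) ≫ (t ▷ A) ≫ (α_ A A A).hom =
    (α_ A A A).inv ≫ (t ▷ A) ≫ (α_ A A A).hom ≫ (A ◁ t)

/-- The counitality condition `t ≫ (1 ⊗ e) = 1 ⊗ e`. -/
def Counital (A : C) (t : A ⊗ A ⟶ A ⊗ A) (e : A ⟶ 𝟙_ C) : Prop :=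
  t ≫ (A ◁ e) = A ◁ e

/-- The multiplication induced by a counital fusion morphism:
`m := t ≫ (e ⊗ 1) ≫ λ_A`. -/
def mulOf (A : C) (t : A ⊗ A ⟶ A ⊗ A) (e : A ⟶ 𝟙_ C) : A ⊗ A ⟶ A :=
  t ≫ (e ▷ A) ≫ (λ_ A).hom


/-- For a counital fusion morphism `(t, e)` on `A` with induced multiplication `m`,
one has `(t ⊗ 1) ≫ (1 ⊗ m) = (1 ⊗ m) ≫ t`. -/
theorem whiskerRight_fusion_mul (A : C) (t : A ⊗ A ⟶ A ⊗ A) (e : A ⟶ 𝟙_ C)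
    (hfus : FusionEq A t) (hcou : Counital A t e) :
    (t ▷ A) ≫ (α_ A A A).hom ≫ (A ◁ mulOf A t e) =
      (α_ A A A).hom ≫ (A ◁ mulOf A t e) ≫ t := by
  rw [FusionEq] at hfus
  rw [Counital] at hcou
  have hfus' : (t ▷ A) ≫ (α_ A A A).hom ≫ (A ◁ t) =
      (α_ A A A).hom ≫ (A ◁ t) ≫ (α_ A A A).inv ≫ ((β_ A A).hom ▷ A) ≫ (α_ A A A).hom ≫
        (A ◁ t) ≫ (α_ A A A).inv ≫ ((β_ A A).inv ▷ A) ≫ (t ▷ A) ≫ (α_ A A A).hom := by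
    rw [hfus]; simp
  simp only [mulOf, MonoidalCategory.whiskerLeft_comp]
  rw [reassoc_of% hfus']
  -- LHS: α ≫ (A◁t) ≫ α⁻¹ ≫ (β▷A) ≫ α ≫ (A◁t) ≫ α⁻¹ ≫ (β⁻¹▷A) ≫ (t▷A) ≫ α ≫ (A◁(e▷A)) ≫ (A◁λ)
  slice_lhs 10 11 => rw [← associator_naturality_middle]
  slice_lhs 9 10 => rw [← comp_whiskerRight, hcou]
  -- atoms: 1 α, 2 (A◁t), 3 α⁻¹, 4 (β▷A), 5 α, 6 (A◁t), 7 α⁻¹, 8 (β⁻¹▷A), 9 ((A◁e)▷A), 10 (α_ A 𝟙 A).hom, 11 (A◁λ)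
  slice_lhs 10 11 => rw [MonoidalCategory.triangle]
  -- 10: (ρ_A).hom ▷ A
  slice_lhs 8 9 =>
    rw [← comp_whiskerRight]
    rw [show (β_ A A).inv ≫ (A ◁ e) = (e ▷ A) ≫ (β_ A (𝟙_ C)).inv from by
      rw [← BraidedCategory.braiding_inv_naturality_left]]
    rw [comp_whiskerRight]
  -- atoms: 1 α, 2 A◁t, 3 α⁻¹, 4 β▷A, 5 α, 6 A◁t, 7 α⁻¹, 8 (e▷A)▷A, 9 (β_A𝟙).inv▷A, 10 ρ▷A
  slice_lhs 9 10 =>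
    rw [← comp_whiskerRight]
    rw [show (β_ A (𝟙_ C)).inv ≫ (ρ_ A).hom = (λ_ A).hom from by
      rw [braiding_inv_tensorUnit_right]; monoidal]
  -- atoms: ... 8 (e▷A)▷A, 9 λ▷A
  slice_lhs 7 8 => rw [← associator_inv_naturality_left]
  -- 7 e▷(A⊗A), 8 (α_𝟙AA).inv, 9 λ▷A  (6 is A◁t)
  slice_lhs 6 7 => rw [whisker_exchange]
  -- 6 e▷(A⊗A), 7 𝟙◁t, 8 (α_𝟙AA).inv, 9 λ▷A
  slice_lhs 8 9 => rw [← leftUnitor_tensor_hom]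
  slice_lhs 7 8 => rw [MonoidalCategory.leftUnitor_naturality]
  -- 1 α,2 A◁t,3 α⁻¹,4 β▷A,5 α,6 e▷(A⊗A),7 λ_{A⊗A},8 t
  slice_lhs 5 6 => rw [← associator_naturality_left]
  -- 5 (e▷A)▷A, 6 (α_𝟙AA).hom, 7 λ_{A⊗A}, 8 t
  slice_lhs 6 7 =>
    rw [show (α_ (𝟙_ C) A A).hom ≫ (λ_ (A ⊗ A)).hom = (λ_ A).hom ▷ A from by
      monoidal]
  -- 1 α,2 A◁t,3 α⁻¹,4 β▷A,5 (e▷A)▷A,6 λ▷A,7 t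
  slice_lhs 4 5 =>
    rw [← comp_whiskerRight]
    rw [show (β_ A A).hom ≫ (e ▷ A) = (A ◁ e) ≫ (β_ A (𝟙_ C)).hom from by
      rw [← BraidedCategory.braiding_naturality_right]]
    rw [comp_whiskerRight]
  -- 4 (A◁e)▷A, 5 (β_A𝟙).hom▷A, 6 λ▷A, 7 t
  slice_lhs 5 6 =>
    rw [← comp_whiskerRight]
    rw [show (β_ A (𝟙_ C)).hom ≫ (λ_ A).hom = (ρ_ A).hom from by
      rw [braiding_tensorUnit_right]; monoidal]
  -- 1 α,2 A◁t,3 α⁻¹,4 (A◁e)▷A,5 ρ▷A,6 t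
  slice_lhs 3 4 => rw [← associator_inv_naturality_middle]
  -- 3 A◁(e▷A), 4 (α_A𝟙A).inv, 5 ρ▷A, 6 t
  slice_lhs 4 5 =>
    rw [show (α_ A (𝟙_ C) A).inv ≫ ((ρ_ A).hom ▷ A) = A ◁ (λ_ A).hom from by
      monoidal]
  simp only [Category.assoc]
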